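/- Let N be a q×q complex matrix and m a natural number with N^{m+1} = 0. Then exp(Σ_{i=1}^m ((−1)^{i−1}/i)·N^i) = I + N, i.e., the matrix Σ_{i=1}^m ((−1)^{i−1}/i)·N^i is a logarithm of I + N. -/

import Mathlib

open Polynomial Finset

noncomputable def pp (m : ℕ) : ℂ[X] := ∑ i ∈ Icc 1 m, ((-1:ℂ)^(i-1)/i) • X^i
noncomputable def QQ (m : ℕ) : ℂ[X] := ∑ k ∈ range (m+1), ((k.factorial : ℂ))⁻¹ • (pp m)^k

theorem deriv_pp (m : ℕ) : (1 + X) * derivative (pp m) = 1 - (-X)^m := by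
  have h1 : derivative (pp m) = ∑ j ∈ range m, (-X)^j := by
    unfold pp
    rw [derivative_sum]
    rw [Finset.sum_bij (fun (i : ℕ) (hi : i ∈ Icc 1 m) => i - 1)]
    · intro i hi
      simp only [mem_Icc] at hi
      simp [mem_range]; omega
    · intro i hi j hj h
      simp only [mem_Icc] at hi hj; omega
    · intro j hj
      exact ⟨j+1, by simp [mem_Icc, mem_range] at *; omega, by simp⟩
    · intro i hi
      simp only [mem_Icc] at hi
      rw [derivative_smul, derivative_X_pow, neg_pow]
      have hi0 : (i : ℂ) ≠ 0 := Nat.cast_ne_zero.mpr (by omega)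
      rw [Polynomial.smul_eq_C_mul]
      push_cast
      rw [← mul_assoc, ← C_mul]
      field_simp
      rw [neg_pow (X : ℂ[X]), one_pow, mul_one, C_pow, C_neg, C_1]
  rw [h1, mul_comm]
  have := geom_sum_mul (-X : ℂ[X]) m
  have h2 : (-X - 1 : ℂ[X]) = -(1 + X) := by ring
  rw [h2] at this
  have : (∑ j ∈ range m, (-X:ℂ[X])^j) * (1 + X) = 1 - (-X)^m := by
    have := this
    linear_combination -this
  exact this

theorem deriv_QQ (m : ℕ) : derivative (QQ m) = derivative (pp m) * (QQ m - ((m.factorial : ℂ))⁻¹ • (pp m)^m) := by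
  unfold QQ
  rw [derivative_sum]
  have hstep : ∀ k ∈ range (m+1), derivative (((k.factorial:ℂ))⁻¹ • (pp m)^k)
      = ((k.factorial:ℂ))⁻¹ • ((k : ℂ[X]) * (pp m)^(k-1) * derivative (pp m)) := by
    intro k _
    rw [derivative_smul, derivative_pow]
    simp
  rw [Finset.sum_congr rfl hstep]
  have hsum : ∑ k ∈ range (m+1), ((k.factorial:ℂ))⁻¹ • ((k : ℂ[X]) * (pp m)^(k-1) * derivative (pp m))
      = ∑ k ∈ range m, ((k.factorial:ℂ))⁻¹ • ((pp m)^k * derivative (pp m)) := by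
    rw [Finset.sum_range_succ']
    simp only [Nat.cast_zero, Nat.factorial_zero, Nat.cast_one, inv_one, zero_mul, smul_zero,
      add_zero, Nat.add_sub_cancel]
    apply Finset.sum_congr rfl
    intro k _
    have hC : ((k:ℂ[X]) + 1) = C ((k:ℂ)+1) := by simp
    push_cast
    rw [mul_assoc, hC, ← Polynomial.smul_eq_C_mul, smul_smul]
    congr 1
    have h1 : ((k:ℂ) + 1) ≠ 0 := Nat.cast_add_one_ne_zero k
    have h2 : ((k.factorial : ℂ)) ≠ 0 := Nat.cast_ne_zero.mpr k.factorial_ne_zero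
    rw [Nat.factorial_succ]
    push_cast
    field_simp
  rw [hsum, Finset.sum_range_succ, add_sub_cancel_right, Finset.mul_sum]
  apply Finset.sum_congr rfl
  intro k _
  rw [mul_smul_comm, mul_comm]

theorem pp_coeff_zero (m : ℕ) : (pp m).coeff 0 = 0 := by
  unfold pp
  rw [finset_sum_coeff]
  apply Finset.sum_eq_zero
  intro i hi
  simp only [mem_Icc] at hi
  rw [coeff_smul, coeff_X_pow]
  simp only [show ¬ (0 = i) by omega, if_false, smul_zero]

theorem X_dvd_pp (m : ℕ) : (X : ℂ[X]) ∣ pp m := X_dvd_iff.mpr (pp_coeff_zero m)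

theorem QQ_coeff_zero (m : ℕ) : (QQ m).coeff 0 = 1 := by
  unfold QQ
  rw [finset_sum_coeff, Finset.sum_eq_single 0]
  · simp
  · intro k _ hk
    rw [coeff_smul, coeff_zero_eq_eval_zero, eval_pow, ← coeff_zero_eq_eval_zero,
      pp_coeff_zero, zero_pow hk, smul_zero]
  · intro h; simp at h

theorem QQ_rec (m : ℕ) (n : ℕ) (hn : n < m) :
    ((n:ℂ)+1) * (QQ m).coeff (n+1) = (1 - (n:ℂ)) * (QQ m).coeff n := by
  set Q := QQ m with hQdef
  set p := pp m
  have hE : (1 + X) * derivative Q - Q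
      = -(((m.factorial : ℂ))⁻¹ • p^m) - (-X)^m * Q + (-X)^m * (((m.factorial : ℂ))⁻¹ • p^m) := by
    rw [deriv_QQ, show (1+X) * (derivative p * (Q - ((m.factorial : ℂ))⁻¹ • p^m))
        = ((1+X) * derivative p) * (Q - ((m.factorial : ℂ))⁻¹ • p^m) by ring, deriv_pp]
    ring
  have hdvd : (X : ℂ[X])^m ∣ (1 + X) * derivative Q - Q := by
    rw [hE]
    have h1 : (X:ℂ[X])^m ∣ p^m := pow_dvd_pow_of_dvd (X_dvd_pp m) m
    have h2 : (X:ℂ[X])^m ∣ (-X)^m := by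
      rw [neg_pow]; exact Dvd.intro_left _ rfl
    have h1' : (X:ℂ[X])^m ∣ ((m.factorial : ℂ))⁻¹ • p^m := by
      rw [Polynomial.smul_eq_C_mul]; exact h1.mul_left _
    exact dvd_add (dvd_sub (dvd_neg.mpr h1') (h2.mul_right _)) (h2.mul_right _)
  have hcoeff : ((1 + X) * derivative Q - Q).coeff n = 0 := by
    rw [Polynomial.X_pow_dvd_iff] at hdvd
    exact hdvd n hn
  rw [coeff_sub, add_mul, one_mul, coeff_add, coeff_derivative] at hcoeff
  have hXQ : (X * derivative Q).coeff n = (n : ℂ) * Q.coeff n := by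
    cases n with
    | zero => simp
    | succ k =>
      rw [coeff_X_mul, coeff_derivative]
      push_cast
      ring
  rw [hXQ] at hcoeff
  push_cast at hcoeff ⊢
  linear_combination hcoeff

theorem QQ_coeff (m : ℕ) : ∀ n, n ≤ m → (QQ m).coeff n = if n = 0 ∨ n = 1 then 1 else 0 := by
  intro n
  induction n using Nat.strong_induction_on with
  | _ n ih =>
    match n with
    | 0 => intro _; simp [QQ_coeff_zero]
    | 1 =>
      intro h1
      have := QQ_rec m 0 (by omega)
      simp only [Nat.cast_zero, zero_add, one_mul, sub_zero] at this
      rw [QQ_coeff_zero] at this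
      simp [this]
    | (k+2) =>
      intro hk
      have hrec := QQ_rec m (k+1) (by omega)
      have hne : ((k+1:ℕ):ℂ) + 1 ≠ 0 := Nat.cast_add_one_ne_zero (k+1)
      rcases Nat.eq_zero_or_pos k with hk0 | hkpos
      · subst hk0
        norm_num at hrec ⊢
        exact hrec
      · have hck : (QQ m).coeff (k+1) = 0 := by
          rw [ih (k+1) (by omega) (by omega)]
          simp [Nat.succ_ne_zero]; omega
        rw [hck, mul_zero] at hrec
        have : (QQ m).coeff (k+2) = 0 := by
          have := mul_eq_zero.mp hrec
          rcases this with h | h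
          · exact absurd h hne
          · exact h
        simp [this]

open Matrix

/-- Let `N` be a `q × q` complex matrix and `m` a natural number with `N^{m+1} = 0`.
Then `exp(∑_{i=1}^m ((−1)^{i−1}/i) N^i) = I + N`, i.e. `∑_{i=1}^m ((−1)^{i−1}/i) N^i`
is a logarithm of `I + N`. -/
theorem exp_log_one_add_nilpotent (q m : ℕ) (N : Matrix (Fin q) (Fin q) ℂ)
    (hN : N ^ (m + 1) = 0) :
    NormedSpace.exp (∑ i ∈ Finset.Icc 1 m, (((-1 : ℂ) ^ (i - 1) / (i : ℂ)) • N ^ i)) =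
      1 + N := by
  rcases Nat.eq_zero_or_pos m with hm | hm
  · subst hm
    have hN0 : N = 0 := by simpa using hN
    simp [hN0, NormedSpace.exp_zero]
  set L := ∑ i ∈ Finset.Icc 1 m, (((-1 : ℂ) ^ (i - 1) / (i : ℂ)) • N ^ i) with hL
  have haevalp : aeval N (pp m) = L := by
    unfold pp
    rw [map_sum]
    apply Finset.sum_congr rfl
    intro i _
    rw [_root_.map_smul, map_pow, aeval_X]
  have hNpow : ∀ k, m + 1 ≤ k → N ^ k = 0 := by
    intro k hk
    have : N ^ k = N ^ (m+1) * N ^ (k - (m+1)) := by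
      rw [← pow_add]; congr 1; omega
    rw [this, hN, zero_mul]
  have hLpow : ∀ k, m + 1 ≤ k → L ^ k = 0 := by
    intro k hk
    obtain ⟨c, hc⟩ := pow_dvd_pow_of_dvd (X_dvd_pp m) k
    have : L ^ k = aeval N ((pp m)^k) := by rw [map_pow, haevalp]
    rw [this, hc, _root_.map_mul, map_pow, aeval_X, hNpow k hk, zero_mul]
  have hexp : NormedSpace.exp L = ∑ k ∈ Finset.range (m+1), ((k.factorial : ℂ))⁻¹ • L ^ k := by
    rw [NormedSpace.exp_eq_tsum (𝕂 := ℂ)]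
    apply tsum_eq_sum
    intro k hk
    rw [Finset.mem_range, not_lt] at hk
    rw [hLpow k hk, smul_zero]
  have haevalQ : aeval N (QQ m) = ∑ k ∈ Finset.range (m+1), ((k.factorial : ℂ))⁻¹ • L ^ k := by
    unfold QQ
    rw [map_sum]
    apply Finset.sum_congr rfl
    intro k _
    rw [_root_.map_smul, map_pow, haevalp]
  rw [hexp, ← haevalQ]
  -- now compute aeval N (QQ m)
  set M := max ((QQ m).natDegree) m + 1 with hM
  have hdeg : (QQ m).natDegree < M := Nat.lt_succ_of_le (le_max_left _ _)
  rw [Polynomial.aeval_eq_sum_range' hdeg]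
  have hterm : ∀ k ∈ Finset.range M, (QQ m).coeff k • N ^ k
      = (if k = 0 then (1 : Matrix (Fin q) (Fin q) ℂ) else if k = 1 then N else 0) := by
    intro k _
    rcases le_or_gt k m with hkm | hkm
    · rw [QQ_coeff m k hkm]
      rcases Nat.eq_zero_or_pos k with rfl | hk0
      · simp
      rcases Nat.eq_or_lt_of_le hk0 with h1 | h2
      · simp [← h1]
      · have hk2 : ¬ (k = 0 ∨ k = 1) := by omega
        simp [hk2, show k ≠ 0 by omega, show k ≠ 1 by omega]
    · rw [hNpow k (by omega), smul_zero]
      simp [show k ≠ 0 by omega, show k ≠ 1 by omega]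
  rw [Finset.sum_congr rfl hterm]
  have hM2 : 2 ≤ M := by
    have : m + 1 ≤ M := Nat.succ_le_succ (le_max_right _ _)
    omega
  rw [Finset.range_eq_Ico, ← Finset.sum_Ico_consecutive _ (Nat.zero_le 2) hM2]
  have h1 : ∑ k ∈ Finset.Ico 0 2, (if k = 0 then (1 : Matrix (Fin q) (Fin q) ℂ) else if k = 1 then N else 0) = 1 + N := by
    rw [← Finset.range_eq_Ico, Finset.sum_range_succ, Finset.sum_range_succ]
    simp
  have h2 : ∑ k ∈ Finset.Ico 2 M, (if k = 0 then (1 : Matrix (Fin q) (Fin q) ℂ) else if k = 1 then N else 0) = 0 := by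
    apply Finset.sum_eq_zero
    intro k hk
    rw [Finset.mem_Ico] at hk
    simp [show k ≠ 0 by omega, show k ≠ 1 by omega]
  rw [h1, h2, add_zero]
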